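/- Let A be a real n×m matrix, let t ≥ 1 be a natural number, and let 0 ≤ u ≤ w be constants such that u‖x‖₂ ≤ ‖Ax‖₂ ≤ w‖x‖₂ for every x ∈ ℝ^m with ‖x‖₀ ≤ 2t. Then for all z₁, z₂ ∈ ℝ^m with ‖z₁‖₀ ≤ t, ‖z₂‖₀ ≤ t and disjoint supports (no index i with (z₁)_i ≠ 0 and (z₂)_i ≠ 0), one has |⟨Az₁, Az₂⟩| ≤ ((w² − u²)/2) ‖z₁‖₂ ‖z₂‖₂. -/

import Mathlib

/-- The number of nonzero entries of a vector (the "l0-norm"). -/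
noncomputable def l0norm {m : ℕ} (x : Fin m → ℝ) : ℕ :=
  (Finset.univ.filter (fun i => x i ≠ 0)).card

/-- The Euclidean norm of a vector in `ℝ^k`. -/
noncomputable def l2norm {k : ℕ} (x : Fin k → ℝ) : ℝ :=
  Real.sqrt (∑ i, (x i) ^ 2)

lemma l2sq {k : ℕ} (x : Fin k → ℝ) : (l2norm x) ^ 2 = ∑ i, (x i) ^ 2 := by
  rw [l2norm, Real.sq_sqrt (Finset.sum_nonneg fun i _ => sq_nonneg _)]

lemma l2nn {k : ℕ} (x : Fin k → ℝ) : 0 ≤ l2norm x := Real.sqrt_nonneg _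

lemma l0_comb {m : ℕ} (a b : ℝ) (x y : Fin m → ℝ) :
    l0norm (fun i => a * x i + b * y i) ≤ l0norm x + l0norm y := by
  unfold l0norm
  refine le_trans (Finset.card_le_card ?_) (Finset.card_union_le _ _)
  intro i hi
  simp only [Finset.mem_filter, Finset.mem_union, Finset.mem_univ, true_and] at hi ⊢
  by_contra h
  push_neg at h
  simp [h.1, h.2] at hi

set_option maxHeartbeats 1000000 in
/-- Lemma 3: if `u ‖x‖₂ ≤ ‖A x‖₂ ≤ w ‖x‖₂` for all `x` with `‖x‖₀ ≤ 2t`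
(`0 ≤ u ≤ w`, `t ≥ 1`), then for all `z₁, z₂` with `‖zᵢ‖₀ ≤ t` and disjoint supports,
`|⟨A z₁, A z₂⟩| ≤ ((w² − u²)/2) ‖z₁‖₂ ‖z₂‖₂`. -/
theorem stmt10 (n m : ℕ) (A : Matrix (Fin n) (Fin m) ℝ) (t : ℕ) (ht : 1 ≤ t)
    (u w : ℝ) (hu : 0 ≤ u) (huw : u ≤ w)
    (hA : ∀ x : Fin m → ℝ, l0norm x ≤ 2 * t →
      u * l2norm x ≤ l2norm (A.mulVec x) ∧ l2norm (A.mulVec x) ≤ w * l2norm x) :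
    ∀ z₁ z₂ : Fin m → ℝ, l0norm z₁ ≤ t → l0norm z₂ ≤ t →
      (∀ i : Fin m, z₁ i ≠ 0 → z₂ i = 0) →
      |∑ j, (A.mulVec z₁) j * (A.mulVec z₂) j| ≤
        (w ^ 2 - u ^ 2) / 2 * l2norm z₁ * l2norm z₂ := by
  intro z₁ z₂ h1 h2 hdisj
  set a := l2norm z₁ with ha
  set b := l2norm z₂ with hb
  have hann : 0 ≤ a := l2nn _
  have hbnn : 0 ≤ b := l2nn _
  -- quadratic form bounds
  have hQ : ∀ x : Fin m → ℝ, l0norm x ≤ 2 * t →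
      u ^ 2 * (∑ i, x i ^ 2) ≤ (∑ j, (A.mulVec x j) ^ 2) ∧
      (∑ j, (A.mulVec x j) ^ 2) ≤ w ^ 2 * ∑ i, x i ^ 2 := by
    intro x hx
    obtain ⟨hl, hr⟩ := hA x hx
    have h0 : 0 ≤ u * l2norm x := mul_nonneg hu (l2nn x)
    have h0' : 0 ≤ l2norm (A.mulVec x) := l2nn _
    constructor
    · have := mul_self_le_mul_self h0 hl
      calc u ^ 2 * ∑ i, x i ^ 2 = (u * l2norm x) ^ 2 := by rw [mul_pow, l2sq]
        _ ≤ (l2norm (A.mulVec x)) ^ 2 := by nlinarith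
        _ = _ := l2sq _
    · have := mul_self_le_mul_self h0' hr
      calc (∑ j, (A.mulVec x j) ^ 2) = (l2norm (A.mulVec x)) ^ 2 := (l2sq _).symm
        _ ≤ (w * l2norm x) ^ 2 := by nlinarith
        _ = w ^ 2 * ∑ i, x i ^ 2 := by rw [mul_pow, l2sq]
  have hcross : ∑ i, z₁ i * z₂ i = 0 := by
    apply Finset.sum_eq_zero
    intro i _
    by_cases h : z₁ i = 0
    · simp [h]
    · simp [hdisj i h]
  have ha2 : ∑ i, z₁ i ^ 2 = a ^ 2 := (l2sq z₁).symm
  have hb2 : ∑ i, z₂ i ^ 2 = b ^ 2 := (l2sq z₂).symm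
  -- the two combined vectors
  set x : Fin m → ℝ := fun i => b * z₁ i + a * z₂ i with hx
  set y : Fin m → ℝ := fun i => b * z₁ i + (-a) * z₂ i with hy
  have hl0x : l0norm x ≤ 2 * t := le_trans (l0_comb b a z₁ z₂) (by omega)
  have hl0y : l0norm y ≤ 2 * t := le_trans (l0_comb b (-a) z₁ z₂) (by omega)
  have hSx : ∑ i, x i ^ 2 = 2 * (a ^ 2 * b ^ 2) := by
    simp only [hx]
    have : ∀ i, (b * z₁ i + a * z₂ i) ^ 2
        = b ^ 2 * z₁ i ^ 2 + a ^ 2 * z₂ i ^ 2 + (2 * a * b) * (z₁ i * z₂ i) := by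
      intro i; ring
    rw [Finset.sum_congr rfl (fun i _ => this i)]
    rw [Finset.sum_add_distrib, Finset.sum_add_distrib, ← Finset.mul_sum, ← Finset.mul_sum,
      ← Finset.mul_sum, hcross, ha2, hb2]
    ring
  have hSy : ∑ i, y i ^ 2 = 2 * (a ^ 2 * b ^ 2) := by
    simp only [hy]
    have : ∀ i, (b * z₁ i + (-a) * z₂ i) ^ 2
        = b ^ 2 * z₁ i ^ 2 + a ^ 2 * z₂ i ^ 2 + (-(2 * a * b)) * (z₁ i * z₂ i) := by
      intro i; ring
    rw [Finset.sum_congr rfl (fun i _ => this i)]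
    rw [Finset.sum_add_distrib, Finset.sum_add_distrib, ← Finset.mul_sum, ← Finset.mul_sum,
      ← Finset.mul_sum, hcross, ha2, hb2]
    ring
  -- A is linear on these combinations
  have hAx : ∀ j, A.mulVec x j = b * A.mulVec z₁ j + a * A.mulVec z₂ j := by
    intro j
    have : x = b • z₁ + a • z₂ := by
      funext i; simp [hx, smul_eq_mul]
    rw [this, Matrix.mulVec_add, Matrix.mulVec_smul, Matrix.mulVec_smul]
    simp [smul_eq_mul]
  have hAy : ∀ j, A.mulVec y j = b * A.mulVec z₁ j + (-a) * A.mulVec z₂ j := by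
    intro j
    have : y = b • z₁ + (-a) • z₂ := by
      funext i; simp [hy, smul_eq_mul]
    rw [this, Matrix.mulVec_add, Matrix.mulVec_smul, Matrix.mulVec_smul]
    simp [smul_eq_mul]
  set P := ∑ j, (A.mulVec z₁) j * (A.mulVec z₂) j with hP
  set Q1 := ∑ j, (A.mulVec z₁ j) ^ 2 with hQ1
  set Q2 := ∑ j, (A.mulVec z₂ j) ^ 2 with hQ2
  have hQx : ∑ j, (A.mulVec x j) ^ 2 = b ^ 2 * Q1 + a ^ 2 * Q2 + 4 * a * b * P - 2 * a * b * P := by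
    rw [Finset.sum_congr rfl (fun j _ => by rw [hAx j])]
    simp only [hP, hQ1, hQ2]
    rw [show ∀ (f : Fin n → ℝ), (∑ j, (b * A.mulVec z₁ j + a * A.mulVec z₂ j) ^ 2)
        = ∑ j, (b ^ 2 * (A.mulVec z₁ j) ^ 2 + a ^ 2 * (A.mulVec z₂ j) ^ 2
          + (2 * a * b) * (A.mulVec z₁ j * A.mulVec z₂ j)) from
      fun _ => Finset.sum_congr rfl (fun j _ => by ring)]
    rw [Finset.sum_add_distrib, Finset.sum_add_distrib, ← Finset.mul_sum, ← Finset.mul_sum,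
      ← Finset.mul_sum]
    · ring
    · exact fun _ => 0
  have hQy : ∑ j, (A.mulVec y j) ^ 2 = b ^ 2 * Q1 + a ^ 2 * Q2 - 2 * a * b * P := by
    rw [Finset.sum_congr rfl (fun j _ => by rw [hAy j])]
    simp only [hP, hQ1, hQ2]
    rw [show (∑ j, (b * A.mulVec z₁ j + (-a) * A.mulVec z₂ j) ^ 2)
        = ∑ j, (b ^ 2 * (A.mulVec z₁ j) ^ 2 + a ^ 2 * (A.mulVec z₂ j) ^ 2
          + (-(2 * a * b)) * (A.mulVec z₁ j * A.mulVec z₂ j)) from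
      Finset.sum_congr rfl (fun j _ => by ring)]
    rw [Finset.sum_add_distrib, Finset.sum_add_distrib, ← Finset.mul_sum, ← Finset.mul_sum,
      ← Finset.mul_sum]
    ring
  obtain ⟨hx_lo, hx_hi⟩ := hQ x hl0x
  obtain ⟨hy_lo, hy_hi⟩ := hQ y hl0y
  rw [hSx] at hx_lo hx_hi
  rw [hSy] at hy_lo hy_hi
  rw [hQx] at hx_lo hx_hi
  rw [hQy] at hy_lo hy_hi
  -- 4ab P = Qx - Qy ≤ 2 w² a² b² - 2 u² a² b², and similarly from below
  have key1 : 4 * (a * b) * P ≤ 2 * (w ^ 2 - u ^ 2) * (a ^ 2 * b ^ 2) := by nlinarith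
  have key2 : -(2 * (w ^ 2 - u ^ 2) * (a ^ 2 * b ^ 2)) ≤ 4 * (a * b) * P := by nlinarith
  rcases eq_or_lt_of_le (mul_nonneg hann hbnn) with hab | hab
  · -- a * b = 0 : one of the vectors is zero
    have hP0 : P = 0 := by
      rcases mul_eq_zero.mp hab.symm with h | h
      · have hz : z₁ = 0 := by
          funext i
          have hs : ∑ i, z₁ i ^ 2 = 0 := by rw [ha2, h]; ring
          have := (Finset.sum_eq_zero_iff_of_nonneg (fun i _ => sq_nonneg (z₁ i))).mp hs
            i (Finset.mem_univ i)
          exact pow_eq_zero_iff (by norm_num) |>.mp this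
        rw [hP, hz]
        simp [Matrix.mulVec_zero]
      · have hz : z₂ = 0 := by
          funext i
          have hs : ∑ i, z₂ i ^ 2 = 0 := by rw [hb2, h]; ring
          have := (Finset.sum_eq_zero_iff_of_nonneg (fun i _ => sq_nonneg (z₂ i))).mp hs
            i (Finset.mem_univ i)
          exact pow_eq_zero_iff (by norm_num) |>.mp this
        rw [hP, hz]
        simp [Matrix.mulVec_zero]
    rw [hP0, abs_zero]
    have hwu : 0 ≤ w ^ 2 - u ^ 2 := by nlinarith
    have : 0 ≤ (w ^ 2 - u ^ 2) / 2 := by linarith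
    exact mul_nonneg (mul_nonneg this hann) hbnn
  · rw [abs_le]
    constructor
    · rw [neg_le]
      have h4 : (0:ℝ) < 4 * (a * b) := by linarith
      rw [← mul_le_mul_iff_right₀ h4]
      calc 4 * (a * b) * -P = -(4 * (a * b) * P) := by ring
        _ ≤ 2 * (w ^ 2 - u ^ 2) * (a ^ 2 * b ^ 2) := by linarith
        _ = 4 * (a * b) * ((w ^ 2 - u ^ 2) / 2 * a * b) := by ring
    · have h4 : (0:ℝ) < 4 * (a * b) := by linarith
      rw [← mul_le_mul_iff_right₀ h4]
      calc 4 * (a * b) * P ≤ 2 * (w ^ 2 - u ^ 2) * (a ^ 2 * b ^ 2) := key1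
        _ = 4 * (a * b) * ((w ^ 2 - u ^ 2) / 2 * a * b) := by ring
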